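/- Let m, p be finite types, let P₁, P₂ : Matrix m m ℂ and Q₁, Q₂ : Matrix p p ℂ all be invertible (IsUnit), and suppose P₁ * P₂ = -(P₂ * P₁) and Q₁ * Q₂ = -(Q₂ * Q₁). Then no nonzero pure tensor is a simultaneous eigenvector of P₁ ⊗ₖ Q₁ and P₂ ⊗ₖ Q₂: there do not exist u : m → ℂ with u ≠ 0, v : p → ℂ with v ≠ 0, and scalars λ₁, λ₂ : ℂ such that (P₁ ⊗ₖ Q₁) *ᵥ (u ⊗ v) = λ₁ • (u ⊗ v) and (P₂ ⊗ₖ Q₂) *ᵥ (u ⊗ v) = λ₂ • (u ⊗ v). -/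

import Mathlib

open Kronecker Matrix

/-- The pure tensor of two vectors. -/
def tensorVec {m p : Type*} (u : m → ℂ) (v : p → ℂ) : m × p → ℂ :=
  fun z => u z.1 * v z.2

lemma kron_mulVec_tensor {m p : Type*} [Fintype m] [Fintype p]
    (A : Matrix m m ℂ) (B : Matrix p p ℂ) (u : m → ℂ) (v : p → ℂ) :
    (A ⊗ₖ B) *ᵥ tensorVec u v = tensorVec (A *ᵥ u) (B *ᵥ v) := by
  funext z
  simp [mulVec, dotProduct, tensorVec, kroneckerMap, Fintype.sum_prod_type,
    Finset.mul_sum, Finset.sum_mul]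
  rw [Finset.sum_comm]
  congr 1; funext j; congr 1; funext i; ring

lemma mulVec_ne_zero {n : Type*} [Fintype n] [DecidableEq n]
    {A : Matrix n n ℂ} (hA : IsUnit A) {u : n → ℂ} (hu : u ≠ 0) : A *ᵥ u ≠ 0 := by
  intro h
  apply hu
  have : A⁻¹ *ᵥ (A *ᵥ u) = u := by
    rw [mulVec_mulVec, Matrix.nonsing_inv_mul A ((Matrix.isUnit_iff_isUnit_det A).mp hA),
      one_mulVec]
  rw [h, mulVec_zero] at this
  exact this.symm

/-- If (A⊗B)(u⊗v)=λ u⊗v with u,v ≠ 0 and B invertible, then u is an eigenvector of A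
with nonzero eigenvalue provided A invertible. -/
lemma eigen_factor {m p : Type*} [Fintype m] [Fintype p] [DecidableEq m] [DecidableEq p]
    {A : Matrix m m ℂ} {B : Matrix p p ℂ} {u : m → ℂ} {v : p → ℂ} {lam : ℂ}
    (hA : IsUnit A) (hB : IsUnit B) (hu : u ≠ 0) (hv : v ≠ 0)
    (h : (A ⊗ₖ B) *ᵥ tensorVec u v = lam • tensorVec u v) :
    ∃ μ : ℂ, μ ≠ 0 ∧ A *ᵥ u = μ • u := by
  rw [kron_mulVec_tensor] at h
  have hBv : B *ᵥ v ≠ 0 := mulVec_ne_zero hB hv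
  obtain ⟨j₀, hj₀⟩ : ∃ j, (B *ᵥ v) j ≠ 0 := by
    by_contra hc; push_neg at hc; exact hBv (funext hc)
  set μ : ℂ := lam * v j₀ / (B *ᵥ v) j₀ with hμ
  have heq : A *ᵥ u = μ • u := by
    funext i
    have := congrFun h (i, j₀)
    simp only [tensorVec, Pi.smul_apply, smul_eq_mul] at this
    have : (A *ᵥ u) i * (B *ᵥ v) j₀ = lam * (u i * v j₀) := this
    rw [Pi.smul_apply, smul_eq_mul, hμ, div_mul_eq_mul_div, eq_div_iff hj₀]
    linear_combination this
  refine ⟨μ, ?_, heq⟩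
  intro hμ0
  apply mulVec_ne_zero hA hu
  rw [heq, hμ0, zero_smul]

theorem no_product_common_eigenvector {m p : Type*} [Fintype m] [Fintype p] [DecidableEq m] [DecidableEq p]
    (P₁ P₂ : Matrix m m ℂ) (Q₁ Q₂ : Matrix p p ℂ)
    (hP₁ : IsUnit P₁) (hP₂ : IsUnit P₂) (hQ₁ : IsUnit Q₁) (hQ₂ : IsUnit Q₂)
    (hP : P₁ * P₂ = -(P₂ * P₁)) (hQ : Q₁ * Q₂ = -(Q₂ * Q₁)) :
    ¬ ∃ (u : m → ℂ) (v : p → ℂ) (lam₁ lam₂ : ℂ), u ≠ 0 ∧ v ≠ 0 ∧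
      (P₁ ⊗ₖ Q₁) *ᵥ tensorVec u v = lam₁ • tensorVec u v ∧
      (P₂ ⊗ₖ Q₂) *ᵥ tensorVec u v = lam₂ • tensorVec u v := by
  rintro ⟨u, v, lam₁, lam₂, hu, hv, h1, h2⟩
  obtain ⟨μ₁, hμ₁, he₁⟩ := eigen_factor hP₁ hQ₁ hu hv h1
  obtain ⟨μ₂, hμ₂, he₂⟩ := eigen_factor hP₂ hQ₂ hu hv h2
  have key : (P₁ * P₂) *ᵥ u = (μ₁ * μ₂) • u := by
    rw [← mulVec_mulVec, he₂, mulVec_smul, he₁, smul_smul, mul_comm μ₂ μ₁]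
  have key' : (P₁ * P₂) *ᵥ u = -((μ₁ * μ₂) • u) := by
    rw [hP, neg_mulVec, ← mulVec_mulVec, he₁, mulVec_smul, he₂, smul_smul]
  rw [key'] at key
  have : (2 * (μ₁ * μ₂)) • u = 0 := by
    have h0 : (μ₁ * μ₂) • u + (μ₁ * μ₂) • u = 0 := neg_eq_iff_add_eq_zero.mp key
    calc (2 * (μ₁ * μ₂)) • u = (μ₁*μ₂) • u + (μ₁*μ₂) • u := by
          rw [← add_smul]; ring_nf
    _ = 0 := h0
  rcases smul_eq_zero.mp this with h | h
  · exact (mul_ne_zero two_ne_zero (mul_ne_zero hμ₁ hμ₂)) h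
  · exact hu h
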